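/- With the notation of the previous statement, if ∑_y q(y)^(1-β) (∑_x P̃(x) W(x,y)^α)^(β/α) = 1 for q = W(x',·) for every x' ∈ X and for every probability distribution P̃ on X (with α > 1, β ≥ 1), then W(x,·) = W(x',·) for all x, x' ∈ X; i.e., maximal α,β-leakage is zero if and only if the channel output distribution does not depend on the input. -/
import Mathlib


open Finset Real

theorem stmt4 {X Y : Type*} [Fintype X] [Nonempty X] [Fintype Y] [Nonempty Y]
    (W : X → Y → ℝ) (hW : ∀ x y, 0 < W x y) (hWsum : ∀ x, ∑ y, W x y = 1)
    {α β : ℝ} (hα : 1 < α) (hβ : 1 ≤ β)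
    (h : ∀ x' : X, ∀ Pt : X → ℝ, (∀ x, 0 ≤ Pt x) → (∑ x, Pt x = 1) →
      ∑ y, W x' y ^ (1 - β) * (∑ x, Pt x * W x y ^ α) ^ (β / α) = 1) :
    ∀ x x' : X, ∀ y : Y, W x y = W x' y := by
  classical
  intro x x' y0
  by_cases hxx : x = x'
  · subst hxx; rfl
  by_contra hne
  have hα0 : (0:ℝ) < α := by linarith
  have hβ0 : (0:ℝ) < β := by linarith
  have hβα : (0:ℝ) < β / α := div_pos hβ0 hα0
  set a : Y → ℝ := W x with ha
  set b : Y → ℝ := W x' with hb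
  have hb0 : ∀ y, 0 < b y := fun y => hW x' y
  have ha0 : ∀ y, 0 < a y := fun y => hW x y
  set p : Y → ℝ := fun y => (a y + b y) / 2 with hp
  have hp0 : ∀ y, 0 < p y := fun y => by
    have := ha0 y; have := hb0 y; simp only [hp]; linarith
  have hpsum : ∑ y, p y = 1 := by
    simp only [hp]
    rw [← Finset.sum_div, Finset.sum_add_distrib, hWsum x, hWsum x']
    norm_num
  -- the distribution Pt: half on x, half on x'
  set Pt : X → ℝ := fun z => ((if z = x then (1:ℝ) else 0) + (if z = x' then 1 else 0)) / 2
    with hPt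
  have hPt0 : ∀ z, 0 ≤ Pt z := fun z => by
    simp only [hPt]; positivity
  have hPtsum : ∑ z, Pt z = 1 := by
    simp only [hPt]
    rw [← Finset.sum_div, Finset.sum_add_distrib]
    rw [Finset.sum_ite_eq' univ x (fun _ => (1:ℝ)),
        Finset.sum_ite_eq' univ x' (fun _ => (1:ℝ))]
    simp
  have key := h x' Pt hPt0 hPtsum
  have hmix : ∀ y, ∑ z, Pt z * W z y ^ α = (a y ^ α + b y ^ α) / 2 := by
    intro y
    simp only [hPt]
    have : ∀ z, ((if z = x then (1:ℝ) else 0) + (if z = x' then 1 else 0)) / 2 * W z y ^ α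
        = ((if z = x then W z y ^ α else 0) + (if z = x' then W z y ^ α else 0)) / 2 := by
      intro z
      rcases eq_or_ne z x with h1 | h1 <;> rcases eq_or_ne z x' with h2 | h2
      · subst h1; exact absurd h2 hxx
      · subst h1; simp [hxx] <;> ring
      · subst h2; simp [h1] <;> ring
      · simp [h1, h2]
    rw [Finset.sum_congr rfl fun z _ => this z, ← Finset.sum_div, Finset.sum_add_distrib,
        Finset.sum_ite_eq' univ x (fun z => W z y ^ α),
        Finset.sum_ite_eq' univ x' (fun z => W z y ^ α)]
    simp [ha, hb]
  rw [Finset.sum_congr rfl fun y _ => by rw [hmix y]] at key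
  -- pointwise: ((a^α + b^α)/2)^(β/α) ≥ p^β, strict at y0
  have hconv := strictConvexOn_rpow hα
  have hpow : ∀ y, p y ^ β ≤ ((a y ^ α + b y ^ α) / 2) ^ (β / α) := by
    intro y
    have h1 : p y ^ α ≤ (a y ^ α + b y ^ α) / 2 := by
      have := hconv.convexOn.2 (le_of_lt (ha0 y) : a y ∈ Set.Ici (0:ℝ))
        (le_of_lt (hb0 y) : b y ∈ Set.Ici (0:ℝ)) (by norm_num : (0:ℝ) ≤ 1/2)
        (by norm_num : (0:ℝ) ≤ 1/2) (by norm_num)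
      simp only [smul_eq_mul] at this
      calc p y ^ α = (1/2 * a y + 1/2 * b y) ^ α := by rw [hp]; ring_nf
        _ ≤ 1/2 * a y ^ α + 1/2 * b y ^ α := this
        _ = (a y ^ α + b y ^ α) / 2 := by ring
    calc p y ^ β = (p y ^ α) ^ (β / α) := by
          rw [← Real.rpow_mul (le_of_lt (hp0 y))]
          congr 1; field_simp
      _ ≤ ((a y ^ α + b y ^ α) / 2) ^ (β / α) :=
          Real.rpow_le_rpow (le_of_lt (Real.rpow_pos_of_pos (hp0 y) α)) h1 (le_of_lt hβα)
  have hpow_strict : p y0 ^ β < ((a y0 ^ α + b y0 ^ α) / 2) ^ (β / α) := by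
    have h1 : p y0 ^ α < (a y0 ^ α + b y0 ^ α) / 2 := by
      have := hconv.2 (le_of_lt (ha0 y0) : a y0 ∈ Set.Ici (0:ℝ))
        (le_of_lt (hb0 y0) : b y0 ∈ Set.Ici (0:ℝ)) hne
        (by norm_num : (0:ℝ) < 1/2) (by norm_num : (0:ℝ) < 1/2) (by norm_num)
      simp only [smul_eq_mul] at this
      calc p y0 ^ α = (1/2 * a y0 + 1/2 * b y0) ^ α := by rw [hp]; ring_nf
        _ < 1/2 * a y0 ^ α + 1/2 * b y0 ^ α := this
        _ = (a y0 ^ α + b y0 ^ α) / 2 := by ring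
    calc p y0 ^ β = (p y0 ^ α) ^ (β / α) := by
          rw [← Real.rpow_mul (le_of_lt (hp0 y0))]
          congr 1; field_simp
      _ < ((a y0 ^ α + b y0 ^ α) / 2) ^ (β / α) :=
          Real.rpow_lt_rpow (le_of_lt (Real.rpow_pos_of_pos (hp0 y0) α)) h1 hβα
  -- Jensen: ∑ b^(1-β) p^β ≥ 1
  have hjensen : 1 ≤ ∑ y, b y ^ (1 - β) * p y ^ β := by
    have hmem : ∀ y ∈ (univ : Finset Y), p y / b y ∈ Set.Ici (0:ℝ) := fun y _ =>
      le_of_lt (div_pos (hp0 y) (hb0 y))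
    have hw0 : ∀ y ∈ (univ : Finset Y), 0 ≤ b y := fun y _ => le_of_lt (hb0 y)
    have hwsum : ∑ y, b y = 1 := hWsum x'
    have hjs := (convexOn_rpow hβ).map_sum_le hw0 hwsum hmem
    have hsv : ∑ y, b y • (p y / b y) = 1 := by
      rw [Finset.sum_congr rfl fun y _ => by
        rw [smul_eq_mul, mul_div_cancel₀ _ (ne_of_gt (hb0 y))]]
      exact hpsum
    rw [hsv, Real.one_rpow] at hjs
    refine hjs.trans (le_of_eq (Finset.sum_congr rfl fun y _ => ?_))
    rw [smul_eq_mul, Real.div_rpow (le_of_lt (hp0 y)) (le_of_lt (hb0 y)),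
        Real.rpow_sub (hb0 y), Real.rpow_one]
    field_simp
  -- combine for contradiction
  have hlt : ∑ y, b y ^ (1 - β) * p y ^ β
      < ∑ y, b y ^ (1 - β) * ((a y ^ α + b y ^ α) / 2) ^ (β / α) := by
    apply Finset.sum_lt_sum
    · intro y _
      exact mul_le_mul_of_nonneg_left (hpow y) (le_of_lt (Real.rpow_pos_of_pos (hb0 y) _))
    · exact ⟨y0, Finset.mem_univ y0,
        mul_lt_mul_of_pos_left hpow_strict (Real.rpow_pos_of_pos (hb0 y0) _)⟩
  rw [key] at hlt
  linarith
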